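/- Let F : ℂ → ℂ be an entire (holomorphic on all of ℂ) function and let 0 < r < R. Then max_{|z|=r} log |F(z)| ≤ ((R+r)/(R-r)) · (1/(2π)) ∫₀^{2π} log⁺ |F(R e^{iθ})| dθ, where log⁺ t = max(0, log t). -/

import Mathlib

open Complex Real MeasureTheory

noncomputable def Complex.abs : AbsoluteValue ℂ ℝ where
  toFun z := ‖z‖
  map_mul' := norm_mul
  nonneg' := norm_nonneg
  eq_zero' _ := norm_eq_zero
  add_le' := norm_add_le

theorem Complex.norm_eq_abs (z : ℂ) : ‖z‖ = Complex.abs z := rfl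

theorem Complex.sq_abs (z : ℂ) : Complex.abs z ^ 2 = Complex.normSq z := Complex.sq_norm z

theorem Complex.abs_exp (z : ℂ) : Complex.abs (Complex.exp z) = Real.exp z.re := Complex.norm_exp z

theorem Complex.continuous_abs : Continuous Complex.abs := continuous_norm

@[simp]
theorem Complex.abs_ofReal (x : ℝ) : Complex.abs (x : ℂ) = |x| := by
  rw [← Complex.norm_eq_abs, Complex.norm_real, Real.norm_eq_abs]

theorem Complex.abs_two : Complex.abs 2 = 2 := by
  rw [← Complex.norm_eq_abs]; simp

theorem Complex.abs_mul_exp_arg_mul_I (x : ℂ) :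
    (Complex.abs x : ℂ) * Complex.exp (Complex.arg x * Complex.I) = x :=
  Complex.norm_mul_exp_arg_mul_I x

section PoissonHerglotz

lemma abs_circ (R : ℝ) (hR : 0 < R) (θ : ℝ) :
    Complex.abs ((R : ℂ) * Complex.exp (θ * Complex.I)) = R := by
  rw [map_mul, Complex.abs_exp]; simp [hR.le]

lemma circ_sub_ne (R : ℝ) (hR : 0 < R) (w : ℂ) (hw : Complex.abs w < R) (θ : ℝ) :
    (R : ℂ) * Complex.exp (θ * Complex.I) - w ≠ 0 := by
  intro h; rw [sub_eq_zero] at h; rw [← h, abs_circ R hR] at hw; exact lt_irrefl _ hw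

lemma cont_circ (R : ℝ) : Continuous fun θ : ℝ => (R : ℂ) * Complex.exp (θ * Complex.I) := by
  continuity

noncomputable def pker (R : ℝ) (w : ℂ) (θ : ℝ) : ℂ :=
  (R * Complex.exp (θ * Complex.I) + w) / (R * Complex.exp (θ * Complex.I) - w)

lemma pker_re (R : ℝ) (hR : 0 < R) (w : ℂ) (hw : Complex.abs w < R) (θ : ℝ) :
    (pker R w θ).re =
      (R ^ 2 - Complex.normSq w) / Complex.normSq ((R : ℂ) * Complex.exp (θ * Complex.I) - w) := by
  set a : ℂ := (R : ℂ) * Complex.exp (θ * Complex.I) with ha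
  have h1 : Complex.normSq a = R ^ 2 := by
    rw [← Complex.sq_abs, abs_circ R hR]
  rw [pker, Complex.div_re, ← ha]
  have h2 : (a + w).re * (a - w).re / Complex.normSq (a - w)
      + (a + w).im * (a - w).im / Complex.normSq (a - w)
      = ((a + w).re * (a - w).re + (a + w).im * (a - w).im) / Complex.normSq (a - w) := by
    ring
  rw [h2]
  congr 1
  have := h1
  simp only [Complex.normSq_apply, Complex.add_re, Complex.sub_re, Complex.add_im,
    Complex.sub_im] at *
  nlinarith [this]

lemma normSq_circ_sub_pos (R : ℝ) (hR : 0 < R) (w : ℂ) (hw : Complex.abs w < R) (θ : ℝ) :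
    0 < Complex.normSq ((R : ℂ) * Complex.exp (θ * Complex.I) - w) :=
  Complex.normSq_pos.2 (circ_sub_ne R hR w hw θ)

lemma pker_re_nonneg (R : ℝ) (hR : 0 < R) (w : ℂ) (hw : Complex.abs w < R) (θ : ℝ) :
    0 ≤ (pker R w θ).re := by
  rw [pker_re R hR w hw θ]
  apply div_nonneg _ (normSq_circ_sub_pos R hR w hw θ).le
  have : Complex.normSq w < R ^ 2 := by
    rw [← Complex.sq_abs]
    exact pow_lt_pow_left₀ hw (Complex.abs.nonneg w) (by norm_num)
  linarith

lemma pker_re_le (R r : ℝ) (hR : 0 < R) (hr : 0 ≤ r) (hrR : r < R) (w : ℂ)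
    (hw : Complex.abs w = r) (θ : ℝ) :
    (pker R w θ).re ≤ (R + r) / (R - r) := by
  have hwR : Complex.abs w < R := hw ▸ hrR
  rw [pker_re R hR w hwR θ]
  have hden : (R - r) ^ 2 ≤ Complex.normSq ((R : ℂ) * Complex.exp (θ * Complex.I) - w) := by
    rw [← Complex.sq_abs]
    have h1 : R - r ≤ Complex.abs ((R : ℂ) * Complex.exp (θ * Complex.I) - w) := by
      have h2 := norm_sub_norm_le ((R : ℂ) * Complex.exp (θ * Complex.I)) w
      simp only [Complex.norm_eq_abs, abs_circ R hR, hw] at h2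
      linarith
    exact pow_le_pow_left₀ (by linarith) h1 2
  have hnsq : Complex.normSq w = r ^ 2 := by rw [← Complex.sq_abs, hw]
  have hd0 : (0:ℝ) < (R - r) ^ 2 := by nlinarith
  have hnum0 : 0 ≤ R ^ 2 - Complex.normSq w := by rw [hnsq]; nlinarith
  have key : (R + r) / (R - r) = (R ^ 2 - r ^ 2) / (R - r) ^ 2 := by
    rw [div_eq_div_iff (by linarith : R - r ≠ 0) (ne_of_gt hd0)]; ring
  rw [key, hnsq]
  exact div_le_div_of_nonneg_left (by nlinarith) hd0 hden

lemma contPsi (F : ℂ → ℂ) (hF : Continuous F) :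
    Continuous (fun w : ℂ => max (Real.log (Complex.abs (F w))) 0) := by
  rw [continuous_iff_continuousAt]
  intro w
  have hc : ContinuousAt (fun u => Complex.abs (F u)) w :=
    (Complex.continuous_abs.comp hF).continuousAt
  by_cases h : F w = 0
  · have hev : ∀ᶠ u in nhds w, max (Real.log (Complex.abs (F u))) 0 = 0 := by
      filter_upwards [hc.eventually_lt_const (by simp [h] : Complex.abs (F w) < 1)] with u hu
      exact max_eq_right (Real.log_nonpos (Complex.abs.nonneg _) hu.le)
    exact continuousAt_const.congr (hev.mono fun u hu => hu.symm)
  · have h' : Complex.abs (F w) ≠ 0 := by simpa using h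
    exact (hc.log h').max continuousAt_const

lemma normSq_circ_sub_eq (R : ℝ) (w : ℂ) (θ : ℝ) :
    Complex.normSq ((R : ℂ) * Complex.exp (θ * Complex.I) - w)
      = (R - (w.re * Real.cos θ + w.im * Real.sin θ)) ^ 2
        + (w.re * Real.sin θ - w.im * Real.cos θ) ^ 2 := by
  have h1 : ((R : ℂ) * Complex.exp (θ * Complex.I)).re = R * Real.cos θ := by
    rw [Complex.re_ofReal_mul, Complex.exp_ofReal_mul_I_re]
  have h2 : ((R : ℂ) * Complex.exp (θ * Complex.I)).im = R * Real.sin θ := by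
    rw [Complex.im_ofReal_mul, Complex.exp_ofReal_mul_I_im]
  have hcs : Real.sin θ ^ 2 + Real.cos θ ^ 2 = 1 := Real.sin_sq_add_cos_sq θ
  rw [Complex.normSq_apply, Complex.sub_re, Complex.sub_im, h1, h2]
  linear_combination (R ^ 2 - w.re ^ 2 - w.im ^ 2) * hcs

lemma Apos (R : ℝ) (w : ℂ) (hw : Complex.abs w < R) (t : ℝ) :
    0 < R - (w.re * Real.cos t + w.im * Real.sin t) := by
  have hcs : Real.sin t ^ 2 + Real.cos t ^ 2 = 1 := Real.sin_sq_add_cos_sq t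
  have h0 : (w.re * Real.cos t + w.im * Real.sin t) ^ 2
      + (w.re * Real.sin t - w.im * Real.cos t) ^ 2 = w.re ^ 2 + w.im ^ 2 := by
    linear_combination (w.re ^ 2 + w.im ^ 2) * hcs
  have h1 : (w.re * Real.cos t + w.im * Real.sin t) ^ 2 ≤ Complex.abs w ^ 2 := by
    rw [Complex.sq_abs, Complex.normSq_apply]
    nlinarith [sq_nonneg (w.re * Real.sin t - w.im * Real.cos t)]
  nlinarith [Complex.abs.nonneg w]

lemma hasDerivAt_gfun (R : ℝ) (hR : 0 < R) (w : ℂ) (hw : Complex.abs w < R) (θ : ℝ) :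
    HasDerivAt (fun t : ℝ => t + 2 * Real.arctan ((w.re * Real.sin t - w.im * Real.cos t) /
        (R - (w.re * Real.cos t + w.im * Real.sin t))))
      ((R ^ 2 - Complex.normSq w) /
        Complex.normSq ((R : ℂ) * Complex.exp (θ * Complex.I) - w)) θ := by
  set A : ℝ → ℝ := fun t => R - (w.re * Real.cos t + w.im * Real.sin t) with hAdef
  set B : ℝ → ℝ := fun t => w.re * Real.sin t - w.im * Real.cos t with hBdef
  have hA : 0 < A θ := Apos R w hw θ
  have hA' : HasDerivAt A (B θ) θ := by
    have h1 : HasDerivAt (fun t => w.re * Real.cos t + w.im * Real.sin t)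
        (w.re * (-Real.sin θ) + w.im * Real.cos θ) θ :=
      ((Real.hasDerivAt_cos θ).const_mul w.re).add ((Real.hasDerivAt_sin θ).const_mul w.im)
    have h2 : B θ = -(w.re * (-Real.sin θ) + w.im * Real.cos θ) := by
      simp only [hBdef]; ring
    rw [h2]
    exact h1.const_sub R
  have hB' : HasDerivAt B (R - A θ) θ := by
    have h1 : HasDerivAt (fun t => w.re * Real.sin t - w.im * Real.cos t)
        (w.re * Real.cos θ - w.im * (-Real.sin θ)) θ :=
      ((Real.hasDerivAt_sin θ).const_mul w.re).sub ((Real.hasDerivAt_cos θ).const_mul w.im)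
    have h2 : R - A θ = w.re * Real.cos θ - w.im * (-Real.sin θ) := by
      simp only [hAdef]; ring
    rw [h2]
    exact h1
  have hq : HasDerivAt (fun t => B t / A t)
      (((R - A θ) * A θ - B θ * B θ) / A θ ^ 2) θ := hB'.div hA' (ne_of_gt hA)
  have harc : HasDerivAt (fun t => Real.arctan (B t / A t))
      ((1 / (1 + (B θ / A θ) ^ 2)) * (((R - A θ) * A θ - B θ * B θ) / A θ ^ 2)) θ :=
    by have h := (Real.hasDerivAt_arctan (B θ / A θ)).comp θ hq; exact h
  have hg : HasDerivAt (fun t : ℝ => t + 2 * Real.arctan (B t / A t))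
      (1 + 2 * ((1 / (1 + (B θ / A θ) ^ 2)) * (((R - A θ) * A θ - B θ * B θ) / A θ ^ 2))) θ :=
    (hasDerivAt_id θ).add (harc.const_mul 2)
  have hABpos : 0 < A θ ^ 2 + B θ ^ 2 := by positivity
  convert hg using 1
  have hD : Complex.normSq ((R : ℂ) * Complex.exp (θ * Complex.I) - w) = A θ ^ 2 + B θ ^ 2 := by
    rw [normSq_circ_sub_eq]
  rw [hD]
  have hkey : 2 * R * A θ - (A θ ^ 2 + B θ ^ 2) = R ^ 2 - Complex.normSq w := by
    simp only [hAdef, hBdef, Complex.normSq_apply]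
    have hcs : Real.sin θ ^ 2 + Real.cos θ ^ 2 = 1 := Real.sin_sq_add_cos_sq θ
    linear_combination (- w.re ^ 2 - w.im ^ 2) * hcs
  have e1 : 1 + 2 * ((1 / (1 + (B θ / A θ) ^ 2)) * (((R - A θ) * A θ - B θ * B θ) / A θ ^ 2))
      = (2 * R * A θ - (A θ ^ 2 + B θ ^ 2)) / (A θ ^ 2 + B θ ^ 2) := by
    have hane : A θ ≠ 0 := ne_of_gt hA
    have hs : A θ ^ 2 + B θ ^ 2 ≠ 0 := ne_of_gt hABpos
    field_simp
    ring
  rw [e1, hkey]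

lemma contP (R : ℝ) (hR : 0 < R) (w : ℂ) (hw : Complex.abs w < R) :
    Continuous fun θ : ℝ => (R ^ 2 - Complex.normSq w) /
      Complex.normSq ((R : ℂ) * Complex.exp (θ * Complex.I) - w) := by
  apply continuous_const.div
  · exact Complex.continuous_normSq.comp ((cont_circ R).sub continuous_const)
  · exact fun θ => ne_of_gt (normSq_circ_sub_pos R hR w hw θ)

lemma integral_pker_re (R : ℝ) (hR : 0 < R) (w : ℂ) (hw : Complex.abs w < R) :
    ∫ θ in (0:ℝ)..(2 * π), (pker R w θ).re = 2 * π := by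
  have h1 : ∫ θ in (0:ℝ)..(2 * π), (pker R w θ).re
      = ∫ θ in (0:ℝ)..(2 * π), (R ^ 2 - Complex.normSq w) /
          Complex.normSq ((R : ℂ) * Complex.exp (θ * Complex.I) - w) := by
    apply intervalIntegral.integral_congr
    intro θ _
    exact pker_re R hR w hw θ
  rw [h1]
  rw [intervalIntegral.integral_eq_sub_of_hasDerivAt
    (fun θ _ => hasDerivAt_gfun R hR w hw θ)
    ((contP R hR w hw).intervalIntegrable _ _)]
  simp [Real.cos_two_pi, Real.sin_two_pi]

section
variable (F : ℂ → ℂ) (R : ℝ)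

noncomputable def psi (θ : ℝ) : ℝ :=
  max (Real.log (Complex.abs (F ((R : ℂ) * Complex.exp (θ * Complex.I))))) 0

lemma psi_cont (hF : Continuous F) : Continuous (psi F R) :=
  (contPsi F hF).comp (cont_circ R)

lemma psi_nonneg (θ : ℝ) : 0 ≤ psi F R θ := le_max_right _ _

noncomputable def HH (w : ℂ) : ℂ :=
  (1 / (2 * π) : ℝ) • ∫ θ in (0:ℝ)..(2 * π), (psi F R θ : ℂ) * pker R w θ

lemma cont_integrand (hF : Continuous F) (hR : 0 < R) (w : ℂ) (hw : Complex.abs w < R) :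
    Continuous fun θ : ℝ => (psi F R θ : ℂ) * pker R w θ := by
  apply (Complex.continuous_ofReal.comp (psi_cont F R hF)).mul
  exact (((cont_circ R).add continuous_const).div ((cont_circ R).sub continuous_const)
    (fun θ => circ_sub_ne R hR w hw θ))

lemma HH_differentiableAt (hF : Continuous F) (hR : 0 < R) (w₀ : ℂ)
    (hw₀ : Complex.abs w₀ < R) : DifferentiableAt ℂ (HH F R) w₀ := by
  set μ : Measure ℝ := volume.restrict (Set.Ioc (0:ℝ) (2 * π)) with hμ
  set ε : ℝ := (R - Complex.abs w₀) / 2 with hε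
  have hε0 : 0 < ε := by simp only [hε]; linarith
  -- bound on psi
  obtain ⟨C, hC⟩ : ∃ C : ℝ, ∀ θ ∈ Set.Icc (0:ℝ) (2 * π), psi F R θ ≤ C := by
    obtain ⟨C, hC⟩ := (isCompact_Icc (a := (0:ℝ)) (b := 2 * π)).exists_bound_of_continuousOn
      ((psi_cont F R hF).continuousOn)
    exact ⟨C, fun θ hθ => (le_abs_self _).trans ((_root_.abs_of_nonneg (psi_nonneg F R θ)) ▸ hC θ hθ)⟩
  have hball : ∀ x ∈ Metric.ball w₀ ε, Complex.abs x < R := by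
    intro x hx
    have := mem_ball_iff_norm.1 hx
    have h2 : Complex.abs x - Complex.abs w₀ ≤ Complex.abs (x - w₀) := by
      have := norm_sub_norm_le x w₀; simpa [Complex.norm_eq_abs] using this
    simp only [Complex.norm_eq_abs] at this
    simp only [hε] at this h2 ⊢
    linarith
  have hdist : ∀ x ∈ Metric.ball w₀ ε, ∀ θ : ℝ,
      ε ≤ Complex.abs ((R : ℂ) * Complex.exp (θ * Complex.I) - x) := by
    intro x hx θ
    have h1 := mem_ball_iff_norm.1 hx
    have h2 : Complex.abs ((R : ℂ) * Complex.exp (θ * Complex.I)) - Complex.abs x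
        ≤ Complex.abs ((R : ℂ) * Complex.exp (θ * Complex.I) - x) := by
      have := norm_sub_norm_le ((R : ℂ) * Complex.exp (θ * Complex.I)) x
      simpa [Complex.norm_eq_abs] using this
    rw [abs_circ R hR] at h2
    have h3 : Complex.abs x ≤ Complex.abs w₀ + ε := by
      have := norm_sub_norm_le x w₀
      simp only [Complex.norm_eq_abs] at this h1
      linarith
    simp only [hε] at h3 ⊢
    linarith
  have key := hasDerivAt_integral_of_dominated_loc_of_deriv_le (μ := μ) (𝕜 := ℂ)
    (F := fun x θ => (psi F R θ : ℂ) * pker R x θ)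
    (F' := fun x θ => (psi F R θ : ℂ) *
      (2 * ((R : ℂ) * Complex.exp (θ * Complex.I)) / ((R : ℂ) * Complex.exp (θ * Complex.I) - x) ^ 2))
    (x₀ := w₀) (bound := fun θ => psi F R θ * (2 * R / ε ^ 2)) (Metric.ball_mem_nhds w₀ hε0)
    ?meas ?int ?meas' ?bnd ?bint ?diff
  case meas =>
    filter_upwards [Metric.ball_mem_nhds w₀ hε0] with x hx
    exact (cont_integrand F R hF hR x (hball x hx)).aestronglyMeasurable
  case int =>
    exact (cont_integrand F R hF hR w₀ hw₀).integrableOn_Ioc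
  case meas' =>
    apply Continuous.aestronglyMeasurable
    apply (Complex.continuous_ofReal.comp (psi_cont F R hF)).mul
    apply (continuous_const.mul (cont_circ R)).div
    · exact ((cont_circ R).sub continuous_const).pow 2
    · exact fun θ => pow_ne_zero 2 (circ_sub_ne R hR w₀ hw₀ θ)
  case bnd =>
    apply Filter.Eventually.of_forall
    intro θ x hx
    set a : ℂ := (R : ℂ) * Complex.exp (θ * Complex.I) with ha
    have habs : Complex.abs a = R := abs_circ R hR θ
    have hd := hdist x hx θ
    rw [Complex.norm_eq_abs, map_mul, map_div₀, map_mul, map_pow, Complex.abs_ofReal,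
      _root_.abs_of_nonneg (psi_nonneg F R θ), habs, Complex.abs_two]
    apply mul_le_mul_of_nonneg_left _ (psi_nonneg F R θ)
    apply div_le_div_of_nonneg_left _ (by positivity) _
    · positivity
    · exact pow_le_pow_left₀ hε0.le hd 2
  case bint =>
    exact ((psi_cont F R hF).mul continuous_const).integrableOn_Ioc
  case diff =>
    apply Filter.Eventually.of_forall
    intro θ x hx
    set a : ℂ := (R : ℂ) * Complex.exp (θ * Complex.I) with ha
    have hd : a - x ≠ 0 := circ_sub_ne R hR x (hball x hx) θ
    have h1 : HasDerivAt (fun y : ℂ => (a + y) / (a - y))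
        ((1 * (a - x) - (a + x) * (-1)) / (a - x) ^ 2) x :=
      HasDerivAt.div ((hasDerivAt_id x).const_add a) ((hasDerivAt_id x).const_sub a) hd
    have h2 : (1 * (a - x) - (a + x) * (-1)) = 2 * a := by ring
    rw [h2] at h1
    exact h1.const_mul ((psi F R θ : ℂ))
  have hHH : HH F R = fun w : ℂ =>
      (1 / (2 * π) : ℝ) • ∫ θ, (psi F R θ : ℂ) * pker R w θ ∂μ := by
    funext w
    rw [HH, intervalIntegral.integral_of_le (by positivity : (0:ℝ) ≤ 2 * π)]
  rw [hHH]
  exact (key.2.differentiableAt).const_smul (1 / (2 * π) : ℝ)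

lemma cont_pker (hR : 0 < R) (w : ℂ) (hw : Complex.abs w < R) :
    Continuous fun θ : ℝ => pker R w θ :=
  ((cont_circ R).add continuous_const).div ((cont_circ R).sub continuous_const)
    (fun θ => circ_sub_ne R hR w hw θ)

lemma HH_re (hF : Continuous F) (hR : 0 < R) (w : ℂ) (hw : Complex.abs w < R) :
    (HH F R w).re = (1 / (2 * π)) * ∫ θ in (0:ℝ)..(2 * π), psi F R θ * (pker R w θ).re := by
  rw [HH, Complex.real_smul, Complex.re_ofReal_mul]
  congr 1
  have h := ContinuousLinearMap.intervalIntegral_comp_comm Complex.reCLM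
    ((cont_integrand F R hF hR w hw).intervalIntegrable (μ := volume) 0 (2 * π))
  simp only [Complex.reCLM_apply] at h
  rw [← h]
  apply intervalIntegral.integral_congr
  intro θ _
  simp [Complex.re_ofReal_mul]

-- the boundary lower bound
set_option maxHeartbeats 1000000 in
lemma boundary (hF : Continuous F) (hR : 0 < R) (ε : ℝ) (hε : 0 < ε) :
    ∃ ρ₀ : ℝ, ρ₀ < R ∧ ∀ w : ℂ, ρ₀ ≤ Complex.abs w → Complex.abs w < R →
      Real.log (Complex.abs (F w)) ≤ (HH F R w).re + ε := by
  set Ψ : ℂ → ℝ := fun w => max (Real.log (Complex.abs (F w))) 0 with hΨdef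
  have hΨc : Continuous Ψ := contPsi F hF
  -- uniform continuity on the closed ball of radius 2R
  have hK : IsCompact (Metric.closedBall (0:ℂ) (2 * R)) := isCompact_closedBall _ _
  have hUC := hK.uniformContinuousOn_of_continuous hΨc.continuousOn
  rw [Metric.uniformContinuousOn_iff] at hUC
  obtain ⟨δ, hδ0, hδ⟩ := hUC (ε / 4) (by linarith)
  set δ' : ℝ := min δ R with hδ'def
  have hδ'0 : 0 < δ' := lt_min hδ0 hR
  -- bound for Ψ on the sphere
  obtain ⟨Cb, hCb⟩ := (isCompact_sphere (0:ℂ) R).exists_bound_of_continuousOn hΨc.continuousOn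
  have hRsph : (R : ℂ) ∈ Metric.sphere (0:ℂ) R := by
    rw [mem_sphere_iff_norm, sub_zero, Complex.norm_real, Real.norm_eq_abs, _root_.abs_of_pos hR]
  have hCb0 : 0 ≤ Cb := le_trans (norm_nonneg _) (hCb (R:ℂ) hRsph)
  have hψCb : ∀ s : ℝ, psi F R s ≤ Cb := by
    intro s
    have hm : (R : ℂ) * Complex.exp (s * Complex.I) ∈ Metric.sphere (0:ℂ) R := by
      rw [mem_sphere_iff_norm, sub_zero, Complex.norm_eq_abs, abs_circ R hR]
    exact le_trans (le_abs_self _) (hCb _ hm)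
  set η : ℝ := min (δ' / 2) (ε * δ' ^ 2 / (32 * R * (Cb + 1))) with hηdef
  have hη0 : 0 < η := lt_min (by linarith) (by positivity)
  refine ⟨R - η, by linarith, ?_⟩
  intro w hw1 hw2
  set ρ : ℝ := Complex.abs w with hρdef
  set t : ℝ := Complex.arg w with htdef
  have hwt : ((ρ : ℝ) : ℂ) * Complex.exp ((t : ℝ) * Complex.I) = w :=
    Complex.abs_mul_exp_arg_mul_I w
  have hρ0 : 0 ≤ ρ := Complex.abs.nonneg w
  have hρR : ρ < R := hw2
  have hRρ : R - ρ ≤ η := by linarith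
  have hη1 : η ≤ δ' / 2 := min_le_left _ _
  have hη2 : η ≤ ε * δ' ^ 2 / (32 * R * (Cb + 1)) := min_le_right _ _
  have hwK : w ∈ Metric.closedBall (0:ℂ) (2 * R) := by
    rw [Metric.mem_closedBall, dist_zero_right, Complex.norm_eq_abs, ← hρdef]
    linarith
  have hcircK : ∀ s : ℝ, (R : ℂ) * Complex.exp (s * Complex.I) ∈ Metric.closedBall (0:ℂ) (2 * R) := by
    intro s
    rw [Metric.mem_closedBall, dist_zero_right, Complex.norm_eq_abs, abs_circ R hR]
    linarith
  have hdistw : dist w ((R : ℂ) * Complex.exp (t * Complex.I)) = R - ρ := by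
    rw [dist_eq_norm, ← hwt]
    have : ((ρ : ℝ) : ℂ) * Complex.exp ((t : ℝ) * Complex.I)
        - (R : ℂ) * Complex.exp (t * Complex.I) = ((ρ - R : ℝ) : ℂ) * Complex.exp (t * Complex.I) := by
      push_cast; ring
    rw [this, Complex.norm_eq_abs, map_mul, Complex.abs_ofReal, Complex.abs_exp]
    simp [abs_of_nonpos (by linarith : ρ - R ≤ 0)]
  -- (a) : Ψ w ≤ ψ t + ε / 4
  have hΨw : Ψ w ≤ psi F R t + ε / 4 := by
    have hd : dist w ((R : ℂ) * Complex.exp (t * Complex.I)) < δ := by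
      rw [hdistw]
      have : δ' ≤ δ := min_le_left _ _
      linarith
    have := hδ w hwK ((R : ℂ) * Complex.exp (t * Complex.I)) (hcircK t) hd
    rw [Real.dist_eq] at this
    have h2 := le_of_lt (lt_of_le_of_lt (le_abs_self _) this)
    have hpsit : psi F R t = Ψ ((R : ℂ) * Complex.exp (t * Complex.I)) := rfl
    rw [hpsit]
    linarith
  -- (b) pointwise kernel estimate
  set P : ℝ → ℝ := fun θ => (pker R w θ).re with hPdef
  have hPc : Continuous P := Complex.continuous_re.comp (cont_pker R hR w hw2)
  have hP0 : ∀ θ, 0 ≤ P θ := fun θ => pker_re_nonneg R hR w hw2 θ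
  have hpt : ∀ θ : ℝ, (psi F R t - psi F R θ) * P θ ≤ ε / 4 * P θ + ε / 2 := by
    intro θ
    by_cases hcase : dist ((R : ℂ) * Complex.exp (θ * Complex.I))
        ((R : ℂ) * Complex.exp (t * Complex.I)) < δ'
    · have hd : dist ((R : ℂ) * Complex.exp (θ * Complex.I))
          ((R : ℂ) * Complex.exp (t * Complex.I)) < δ :=
        lt_of_lt_of_le hcase (min_le_left _ _)
      have := hδ _ (hcircK θ) _ (hcircK t) hd
      rw [Real.dist_eq] at this
      have h2 : psi F R t - psi F R θ ≤ ε / 4 := by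
        have := neg_abs_le (Ψ ((R : ℂ) * Complex.exp (θ * Complex.I))
          - Ψ ((R : ℂ) * Complex.exp (t * Complex.I)))
        have hx : psi F R θ = Ψ ((R : ℂ) * Complex.exp (θ * Complex.I)) := rfl
        have hy : psi F R t = Ψ ((R : ℂ) * Complex.exp (t * Complex.I)) := rfl
        rw [hx, hy]
        linarith [abs_nonneg (Ψ ((R : ℂ) * Complex.exp (θ * Complex.I))
          - Ψ ((R : ℂ) * Complex.exp (t * Complex.I)))]
      have := mul_le_mul_of_nonneg_right h2 (hP0 θ)
      linarith
    · push_neg at hcase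
      -- far field: P θ is small
      have hsep : δ' / 2 ≤ Complex.abs ((R : ℂ) * Complex.exp (θ * Complex.I) - w) := by
        have htri := dist_triangle ((R : ℂ) * Complex.exp (θ * Complex.I)) w
          ((R : ℂ) * Complex.exp (t * Complex.I))
        have h2 : dist w ((R : ℂ) * Complex.exp (t * Complex.I)) = R - ρ := hdistw
        have h3 : dist ((R : ℂ) * Complex.exp (θ * Complex.I)) w
            = Complex.abs ((R : ℂ) * Complex.exp (θ * Complex.I) - w) := by
          rw [dist_eq_norm, Complex.norm_eq_abs]
        rw [h3, h2] at htri
        have := hcase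
        linarith
      have hPle : P θ ≤ (R ^ 2 - ρ ^ 2) / (δ' / 2) ^ 2 := by
        rw [hPdef]
        simp only
        rw [pker_re R hR w hw2 θ]
        have hnsq : Complex.normSq w = ρ ^ 2 := by rw [← Complex.sq_abs, ← hρdef]
        rw [hnsq]
        apply div_le_div_of_nonneg_left (by nlinarith) (by positivity)
        rw [← Complex.sq_abs]
        exact pow_le_pow_left₀ (by positivity) hsep 2
      have hfar : (psi F R t - psi F R θ) * P θ ≤ ε / 2 := by
        have h1 : (psi F R t - psi F R θ) * P θ ≤ Cb * P θ := by
          apply mul_le_mul_of_nonneg_right _ (hP0 θ)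
          have := psi_nonneg F R θ
          linarith [hψCb t]
        have h2 : Cb * P θ ≤ Cb * ((R ^ 2 - ρ ^ 2) / (δ' / 2) ^ 2) :=
          mul_le_mul_of_nonneg_left hPle hCb0
        have h3 : R ^ 2 - ρ ^ 2 ≤ 2 * R * η := by nlinarith
        have h4 : Cb * ((R ^ 2 - ρ ^ 2) / (δ' / 2) ^ 2) ≤ Cb * ((2 * R * η) / (δ' / 2) ^ 2) :=
          mul_le_mul_of_nonneg_left ((div_le_div_iff_of_pos_right (by positivity)).2 h3) hCb0
        have h5 : Cb * ((2 * R * η) / (δ' / 2) ^ 2) = 8 * R * Cb * η / δ' ^ 2 := by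
          field_simp; ring
        have h6 : 8 * R * Cb * η / δ' ^ 2
            ≤ 8 * R * Cb * (ε * δ' ^ 2 / (32 * R * (Cb + 1))) / δ' ^ 2 := by
          apply (div_le_div_iff_of_pos_right (by positivity)).2
          apply mul_le_mul_of_nonneg_left hη2 (by positivity)
        have h7 : 8 * R * Cb * (ε * δ' ^ 2 / (32 * R * (Cb + 1))) / δ' ^ 2
            = ε * Cb / (4 * (Cb + 1)) := by
          field_simp; ring
        have h8 : ε * Cb / (4 * (Cb + 1)) ≤ ε / 2 := by
          rw [div_le_div_iff₀ (by positivity) (by norm_num)]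
          nlinarith
        linarith
      have := mul_nonneg (le_of_lt (by linarith : (0:ℝ) < ε / 4)) (hP0 θ)
      linarith
  -- integrate the pointwise estimate
  have hpsic := psi_cont F R hF
  have i1 : IntervalIntegrable (fun θ => psi F R t * P θ) volume 0 (2 * π) :=
    (continuous_const.mul hPc).intervalIntegrable _ _
  have i2 : IntervalIntegrable (fun θ => psi F R θ * P θ) volume 0 (2 * π) :=
    (hpsic.mul hPc).intervalIntegrable _ _
  have i3 : IntervalIntegrable (fun θ => ε / 4 * P θ + ε / 2) volume 0 (2 * π) :=
    ((continuous_const.mul hPc).add continuous_const).intervalIntegrable _ _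
  have i0 : IntervalIntegrable (fun θ => (psi F R t - psi F R θ) * P θ) volume 0 (2 * π) :=
    ((continuous_const.sub hpsic).mul hPc).intervalIntegrable _ _
  have hmono := intervalIntegral.integral_mono_on (by positivity : (0:ℝ) ≤ 2 * π) i0 i3
    (fun θ _ => hpt θ)
  have hPint : ∫ θ in (0:ℝ)..(2 * π), P θ = 2 * π := by
    simp only [hPdef]
    exact integral_pker_re R hR w hw2
  have e1 : ∫ θ in (0:ℝ)..(2 * π), (psi F R t - psi F R θ) * P θ
      = psi F R t * (2 * π) - ∫ θ in (0:ℝ)..(2 * π), psi F R θ * P θ := by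
    simp only [sub_mul]
    rw [intervalIntegral.integral_sub i1 i2, intervalIntegral.integral_const_mul, hPint]
  have e2 : ∫ θ in (0:ℝ)..(2 * π), (ε / 4 * P θ + ε / 2) = ε / 4 * (2 * π) + ε / 2 * (2 * π) := by
    rw [intervalIntegral.integral_add (f := fun θ => ε / 4 * P θ) (g := fun _ => ε / 2)
      ((continuous_const.mul hPc).intervalIntegrable _ _)
      intervalIntegrable_const, intervalIntegral.integral_const_mul, hPint,
      intervalIntegral.integral_const]
    simp [smul_eq_mul]
    ring
  rw [e1, e2] at hmono
  set S : ℝ := ∫ θ in (0:ℝ)..(2 * π), psi F R θ * P θ with hSdef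
  have hHHre : (HH F R w).re = 1 / (2 * π) * S := by
    rw [hSdef]
    simp only [hPdef]
    exact HH_re F R hF hR w hw2
  have h2π : (0:ℝ) < 2 * π := by positivity
  have hS' : (psi F R t - 3 / 4 * ε) * (2 * π) ≤ S := by
    have hexp : (psi F R t - 3 / 4 * ε) * (2 * π)
        = psi F R t * (2 * π) - (ε / 4 * (2 * π) + ε / 2 * (2 * π)) := by ring
    rw [hexp]
    linarith
  have hb : psi F R t - 3 / 4 * ε ≤ 1 / (2 * π) * S := by
    rw [one_div, inv_mul_eq_div]
    exact (le_div_iff₀ h2π).2 hS'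
  have hfinal1 : Real.log (Complex.abs (F w)) ≤ Ψ w := le_max_left _ _
  rw [hHHre]
  linarith

lemma HH_re_le (hF : Continuous F) (r : ℝ) (hr : 0 < r) (hrR : r < R) (z : ℂ)
    (hz : Complex.abs z = r) :
    (HH F R z).re ≤ (R + r) / (R - r) * ((1 / (2 * π)) * ∫ θ in (0:ℝ)..(2 * π), psi F R θ) := by
  have hR : 0 < R := hr.trans hrR
  have hzR : Complex.abs z < R := hz ▸ hrR
  rw [HH_re F R hF hR z hzR]
  have hPc : Continuous fun θ => (pker R z θ).re :=
    Complex.continuous_re.comp (cont_pker R hR z hzR)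
  have hpsic := psi_cont F R hF
  have hmono := intervalIntegral.integral_mono_on (by positivity : (0:ℝ) ≤ 2 * π)
    ((hpsic.mul hPc).intervalIntegrable (μ := volume) _ _)
    ((hpsic.mul continuous_const).intervalIntegrable _ _)
    (fun θ _ => mul_le_mul_of_nonneg_left (pker_re_le R r hR hr.le hrR z hz θ)
      (psi_nonneg F R θ))
  simp only [Pi.mul_apply] at hmono
  rw [intervalIntegral.integral_mul_const] at hmono
  have h1 : (0:ℝ) ≤ 1 / (2 * π) := by positivity
  calc (1 / (2 * π)) * ∫ θ in (0:ℝ)..(2 * π), psi F R θ * (pker R z θ).re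
      ≤ (1 / (2 * π)) * ((∫ θ in (0:ℝ)..(2 * π), psi F R θ) * ((R + r) / (R - r))) :=
        mul_le_mul_of_nonneg_left hmono h1
    _ = (R + r) / (R - r) * ((1 / (2 * π)) * ∫ θ in (0:ℝ)..(2 * π), psi F R θ) := by ring

theorem max_log_abs_le_proximity' (hF : Differentiable ℂ F)
    (r : ℝ) (hr : 0 < r) (hrR : r < R) :
    ∀ z : ℂ, Complex.abs z = r →
      Real.log (Complex.abs (F z)) ≤
        ((R + r) / (R - r)) * ((1 / (2 * π)) *
          ∫ θ in (0:ℝ)..(2 * π),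
            max (Real.log (Complex.abs (F (R * Complex.exp (θ * Complex.I))))) 0) := by
  intro z hz
  have hR : 0 < R := hr.trans hrR
  have hpsieq : (∫ θ in (0:ℝ)..(2 * π),
      max (Real.log (Complex.abs (F (R * Complex.exp (θ * Complex.I))))) 0)
      = ∫ θ in (0:ℝ)..(2 * π), psi F R θ := rfl
  rw [hpsieq]
  have hMnn : 0 ≤ (1 / (2 * π)) * ∫ θ in (0:ℝ)..(2 * π), psi F R θ := by
    apply mul_nonneg (by positivity)
    exact intervalIntegral.integral_nonneg (by positivity) (fun θ _ => psi_nonneg F R θ)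
  have hCnn : (0:ℝ) ≤ (R + r) / (R - r) := by
    apply div_nonneg <;> linarith
  by_cases hFz : Complex.abs (F z) = 0
  · rw [hFz, Real.log_zero]
    exact mul_nonneg hCnn hMnn
  have hzR : Complex.abs z < R := hz ▸ hrR
  apply le_of_forall_pos_le_add
  intro ε hε
  obtain ⟨ρ₀, hρ₀R, hbd⟩ := boundary F R hF.continuous hR ε hε
  set ρ : ℝ := max ρ₀ ((r + R) / 2) with hρdef
  have hρR : ρ < R := by
    apply max_lt hρ₀R; linarith
  have hρr : r < ρ := lt_of_lt_of_le (by linarith) (le_max_right _ _)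
  have hρ0 : 0 < ρ := hr.trans hρr
  -- the auxiliary function
  set h : ℂ → ℂ := fun w => F w * Complex.exp (-HH F R w) with hhdef
  have hdiffR : DifferentiableOn ℂ h (Metric.ball (0:ℂ) R) := by
    intro w hw
    have hwR : Complex.abs w < R := by
      rw [Metric.mem_ball, dist_zero_right, Complex.norm_eq_abs] at hw; exact hw
    exact ((hF w).mul
      (((HH_differentiableAt F R hF.continuous hR w hwR).neg).cexp)).differentiableWithinAt
  have hsub : closure (Metric.ball (0:ℂ) ρ) ⊆ Metric.ball (0:ℂ) R := by
    rw [closure_ball (0:ℂ) (ne_of_gt hρ0)]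
    exact Metric.closedBall_subset_ball hρR
  have hdc : DiffContOnCl ℂ h (Metric.ball (0:ℂ) ρ) :=
    ⟨hdiffR.mono (Metric.ball_subset_ball hρR.le),
     (hdiffR.continuousOn).mono hsub⟩
  have hfr : ∀ w ∈ frontier (Metric.ball (0:ℂ) ρ), ‖h w‖ ≤ Real.exp ε := by
    rw [frontier_ball (0:ℂ) (ne_of_gt hρ0)]
    intro w hw
    have hwρ : Complex.abs w = ρ := by
      rw [mem_sphere_iff_norm, sub_zero, Complex.norm_eq_abs] at hw; exact hw
    have hw1 : ρ₀ ≤ Complex.abs w := by rw [hwρ]; exact le_max_left _ _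
    have hw2 : Complex.abs w < R := by rw [hwρ]; exact hρR
    have hlog := hbd w hw1 hw2
    have hnorm : ‖h w‖ = Complex.abs (F w) * Real.exp (-(HH F R w).re) := by
      rw [hhdef]
      simp only [Complex.norm_eq_abs, map_mul, Complex.abs_exp, Complex.neg_re]
    rw [hnorm]
    by_cases hFw : Complex.abs (F w) = 0
    · rw [hFw, zero_mul]; positivity
    · have hFwpos : 0 < Complex.abs (F w) :=
        lt_of_le_of_ne (Complex.abs.nonneg _) (Ne.symm hFw)
      have h1 : Complex.abs (F w) ≤ Real.exp ((HH F R w).re + ε) := by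
        rw [← Real.exp_log hFwpos]
        exact Real.exp_le_exp.2 hlog
      calc Complex.abs (F w) * Real.exp (-(HH F R w).re)
          ≤ Real.exp ((HH F R w).re + ε) * Real.exp (-(HH F R w).re) :=
            mul_le_mul_of_nonneg_right h1 (Real.exp_nonneg _)
        _ = Real.exp ε := by rw [← Real.exp_add]; ring_nf
  have hzcl : z ∈ closure (Metric.ball (0:ℂ) ρ) := by
    rw [closure_ball (0:ℂ) (ne_of_gt hρ0), Metric.mem_closedBall, dist_zero_right,
      Complex.norm_eq_abs, hz]
    exact hρr.le
  have hmax := Complex.norm_le_of_forall_mem_frontier_norm_le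
    (Metric.isBounded_ball) hdc hfr hzcl
  -- unpack
  have hnormz : ‖h z‖ = Complex.abs (F z) * Real.exp (-(HH F R z).re) := by
    rw [hhdef]
    simp only [Complex.norm_eq_abs, map_mul, Complex.abs_exp, Complex.neg_re]
  rw [hnormz] at hmax
  have hFzpos : 0 < Complex.abs (F z) := lt_of_le_of_ne (Complex.abs.nonneg _) (Ne.symm hFz)
  have hFz2 : Complex.abs (F z) ≤ Real.exp ((HH F R z).re + ε) := by
    have hexp : Real.exp ((HH F R z).re + ε)
        = Real.exp ε * Real.exp ((HH F R z).re) := by rw [← Real.exp_add]; ring_nf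
    rw [hexp]
    have := mul_le_mul_of_nonneg_right hmax (Real.exp_nonneg ((HH F R z).re))
    calc Complex.abs (F z)
        = Complex.abs (F z) * Real.exp (-(HH F R z).re) * Real.exp ((HH F R z).re) := by
          rw [mul_assoc, ← Real.exp_add]; simp
      _ ≤ Real.exp ε * Real.exp ((HH F R z).re) := this
  have hlogz : Real.log (Complex.abs (F z)) ≤ (HH F R z).re + ε := by
    have := Real.log_le_log hFzpos hFz2
    rwa [Real.log_exp] at this
  have := HH_re_le F R hF.continuous r hr hrR z hz
  linarith

end

end PoissonHerglotz

theorem max_log_abs_le_proximity (F : ℂ → ℂ) (hF : Differentiable ℂ F)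
    (r R : ℝ) (hr : 0 < r) (hrR : r < R) :
    ∀ z : ℂ, ‖z‖ = r →
      Real.log ‖F z‖ ≤
        ((R + r) / (R - r)) * ((1 / (2 * π)) *
          ∫ θ in (0:ℝ)..(2 * π),
            max (Real.log ‖F (R * Complex.exp (θ * Complex.I))‖) 0) := by
  exact max_log_abs_le_proximity' F R hF r hr hrR
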